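/- Let Γ be a cocompact Kleinian group and let α ∈ comm(Γ) \ Γ. Then there exists a constant c₀ > 1 such that N(T) > c₀ for every loxodromic element T of the double coset Γα⁻¹Γ. -/

import Mathlib

open Matrix Complex Pointwise

/-- `SL(2,ℂ)`. -/
abbrev SL2C := Matrix.SpecialLinearGroup (Fin 2) ℂ

/-- The topology on `SL(2,ℂ)` induced from the matrix entries. -/
noncomputable instance : TopologicalSpace SL2C :=
  TopologicalSpace.induced (fun A => (A : Matrix (Fin 2) (Fin 2) ℂ)) inferInstance

/-- `PSL(2,ℂ)`, the quotient of `SL(2,ℂ)` by its center `{±I}`,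
equipped with the quotient topology. -/
abbrev PSL2C := SL2C ⧸ Subgroup.center SL2C

/-- The diagonal matrix `diag(a, a⁻¹)` as an element of `SL(2,ℂ)`. -/
noncomputable def dMat (a : ℂ) (h : a ≠ 0) : SL2C :=
  ⟨!![a, 0; 0, a⁻¹], by rw [Matrix.det_fin_two_of]; simp [mul_inv_cancel₀ h]⟩

/-- The projection `SL(2,ℂ) → PSL(2,ℂ)`. -/
def projMk : SL2C →* PSL2C := QuotientGroup.mk' _

/-- `T ∈ PSL(2,ℂ)` is loxodromic with diagonal parameter `a`: it is conjugate in
`PSL(2,ℂ)` to (the class of) `diag(a, a⁻¹)` with `|a| > 1`.  Its norm is `N(T) = |a|²`. -/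
def IsLoxodromicWith (T : PSL2C) (a : ℂ) : Prop :=
  ∃ h : a ≠ 0, 1 < ‖a‖ ∧ IsConj (projMk (dMat a h)) T

/-- `T ∈ PSL(2,ℂ)` is loxodromic. -/
def IsLoxodromic (T : PSL2C) : Prop := ∃ a : ℂ, IsLoxodromicWith T a

/-- `T ∈ PSL(2,ℂ)` is elliptic: a nonidentity element conjugate to (the class of)
`diag(e^{iφ/2}, e^{-iφ/2})` for some real `φ`. -/
def IsElliptic (T : PSL2C) : Prop :=
  T ≠ 1 ∧ ∃ φ : ℝ,
    IsConj (projMk (dMat (Complex.exp (φ * Complex.I / 2)) (Complex.exp_ne_zero _))) T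

/-- `T ∈ PSL(2,ℂ)` is parabolic: a nonidentity element whose trace squared equals `4`. -/
def IsParabolic (T : PSL2C) : Prop :=
  T ≠ 1 ∧ ∃ S : SL2C, projMk S = T ∧ (Matrix.trace (S : Matrix (Fin 2) (Fin 2) ℂ)) ^ 2 = 4

/-- The conjugate subgroup `α⁻¹ Γ α`. -/
def conjSG (Γ : Subgroup PSL2C) (α : PSL2C) : Subgroup PSL2C :=
  Γ.map (MulAut.conj α⁻¹).toMonoidHom

/-- `α` belongs to the commensurator of `Γ` in `PSL(2,ℂ)`: both indices
`[Γ : Γ ∩ α⁻¹Γα]` and `[α⁻¹Γα : Γ ∩ α⁻¹Γα]` are finite. -/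
def InCommensurator (Γ : Subgroup PSL2C) (α : PSL2C) : Prop :=
  (conjSG Γ α).relIndex Γ ≠ 0 ∧ Γ.relIndex (conjSG Γ α) ≠ 0

/-- The double coset `Γ g Γ = {γ₁ g γ₂ : γ₁, γ₂ ∈ Γ}`. -/
def doubleCoset (Γ : Subgroup PSL2C) (g : PSL2C) : Set PSL2C :=
  {x | ∃ γ₁ ∈ Γ, ∃ γ₂ ∈ Γ, x = γ₁ * g * γ₂}

/-- The centralizer `C_Γ(T) = {σ ∈ Γ : σT = Tσ}` of `T` in `Γ`, as a subgroup. -/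
def centIn (Γ : Subgroup PSL2C) (T : PSL2C) : Subgroup PSL2C :=
  Γ ⊓ Subgroup.centralizer {T}

/-- `R` is primitive in `Γ`: there is no `S ∈ Γ` and integer `m ≥ 2` with `Sᵐ = R`. -/
def IsPrimitive (Γ : Subgroup PSL2C) (R : PSL2C) : Prop :=
  ¬ ∃ S ∈ Γ, ∃ m : ℕ, 2 ≤ m ∧ S ^ m = R

/-! ### Auxiliary topological facts -/

noncomputable instance : IsTopologicalGroup SL2C where
  continuous_mul := by
    apply continuous_induced_rng.2
    exact (continuous_induced_dom.comp continuous_fst).matrix_mul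
      (continuous_induced_dom.comp continuous_snd)
  continuous_inv := by
    apply continuous_induced_rng.2
    have h : ((fun A : SL2C => (A : Matrix (Fin 2) (Fin 2) ℂ)) ∘ fun a : SL2C => a⁻¹)
        = fun A : SL2C => Matrix.adjugate (A : Matrix (Fin 2) (Fin 2) ℂ) := by
      funext A; exact Matrix.SpecialLinearGroup.coe_inv A
    rw [h]
    exact continuous_induced_dom.matrix_adjugate

lemma sl2c_isEmbedding :
    Topology.IsEmbedding (fun A : SL2C => (A : Matrix (Fin 2) (Fin 2) ℂ)) :=
  ⟨⟨rfl⟩, fun _ _ h => Subtype.ext h⟩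

lemma sl2c_isClosedEmbedding :
    Topology.IsClosedEmbedding (fun A : SL2C => (A : Matrix (Fin 2) (Fin 2) ℂ)) := by
  refine ⟨sl2c_isEmbedding, ?_⟩
  have h : Set.range (fun A : SL2C => (A : Matrix (Fin 2) (Fin 2) ℂ))
      = {M : Matrix (Fin 2) (Fin 2) ℂ | M.det = 1} := by
    ext M
    constructor
    · rintro ⟨A, rfl⟩; exact A.2
    · intro h; exact ⟨⟨M, h⟩, rfl⟩
  rw [h]
  exact isClosed_eq (continuous_id.matrix_det) continuous_const

instance : T2Space SL2C := sl2c_isEmbedding.t2Space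

instance : LocallyCompactSpace (Matrix (Fin 2) (Fin 2) ℂ) :=
  inferInstanceAs (LocallyCompactSpace (Fin 2 → Fin 2 → ℂ))

instance : LocallyCompactSpace SL2C := sl2c_isClosedEmbedding.locallyCompactSpace

instance : IsClosed ((Subgroup.center SL2C) : Set SL2C) := by
  have h : ((Subgroup.center SL2C) : Set SL2C)
      = ⋂ g : SL2C, {x : SL2C | g * x = x * g} := by
    ext x
    simp only [Set.mem_iInter, Set.mem_setOf_eq, SetLike.mem_coe, Subgroup.mem_center_iff]
  rw [h]
  exact isClosed_iInter fun g =>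
    isClosed_eq (continuous_const.mul continuous_id) (continuous_id.mul continuous_const)

/-- A locally compact topological group with compact quotient admits a compact set of
coset representatives. -/
lemma exists_compact_cover {G : Type*} [Group G] [TopologicalSpace G] [IsTopologicalGroup G]
    [LocallyCompactSpace G] (Γ : Subgroup G) [CompactSpace (G ⧸ Γ)] :
    ∃ K : Set G, IsCompact K ∧
      ∀ g : G, ∃ k ∈ K, (QuotientGroup.mk k : G ⧸ Γ) = QuotientGroup.mk g := by
  choose C hCc hCn using fun g : G => exists_compact_mem_nhds g
  have hcov : (Set.univ : Set (G ⧸ Γ)) ⊆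
      ⋃ g : G, (QuotientGroup.mk '' interior (C g) : Set (G ⧸ Γ)) := by
    intro x _
    obtain ⟨g, rfl⟩ := QuotientGroup.mk_surjective x
    exact Set.mem_iUnion.2 ⟨g, ⟨g, mem_interior_iff_mem_nhds.2 (hCn g), rfl⟩⟩
  obtain ⟨t, ht⟩ := isCompact_univ.elim_finite_subcover
    (fun g : G => (QuotientGroup.mk '' interior (C g) : Set (G ⧸ Γ)))
    (fun g => QuotientGroup.isOpenMap_coe (interior (C g)) isOpen_interior) hcov
  refine ⟨⋃ g ∈ t, C g, t.finite_toSet.isCompact_biUnion fun g _ => hCc g, fun g => ?_⟩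
  have h0 := ht (Set.mem_univ (QuotientGroup.mk g : G ⧸ Γ))
  obtain ⟨i, hit, k, hk, hkeq⟩ := by simpa using h0
  exact ⟨k, Set.mem_biUnion hit (interior_subset hk), hkeq⟩

/-! ### Auxiliary algebraic facts -/

lemma trace_dMat (a : ℂ) (h : a ≠ 0) :
    Matrix.trace ((dMat a h : SL2C) : Matrix (Fin 2) (Fin 2) ℂ) = a + a⁻¹ := by
  simp [dMat, Matrix.trace_fin_two]

/-- Two loxodromic diagonal classes which are conjugate in `PSL(2,ℂ)` have equal
diagonal modulus. -/
lemma abs_eq_of_isConj {a b : ℂ} (ha : a ≠ 0) (hb : b ≠ 0)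
    (ha1 : 1 < ‖a‖) (hb1 : 1 < ‖b‖)
    (h : IsConj (projMk (dMat a ha)) (projMk (dMat b hb))) :
    ‖a‖ = ‖b‖ := by
  obtain ⟨c, hc⟩ := isConj_iff.mp h
  obtain ⟨C, rfl⟩ := QuotientGroup.mk'_surjective (Subgroup.center SL2C) c
  have hc' : projMk (C * dMat a ha * C⁻¹) = projMk (dMat b hb) := by
    rw [_root_.map_mul, _root_.map_mul, _root_.map_inv]; exact hc
  obtain ⟨z, hz, hzeq⟩ := (QuotientGroup.mk'_eq_mk' (Subgroup.center SL2C)).mp hc'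
  obtain ⟨r, hr, hrz⟩ := Matrix.SpecialLinearGroup.mem_center_iff.mp hz
  simp only [Fintype.card_fin] at hr
  have htr : b + b⁻¹ = r * (a + a⁻¹) := by
    have h1 := congrArg (fun X : SL2C => Matrix.trace (X : Matrix (Fin 2) (Fin 2) ℂ)) hzeq
    rw [trace_dMat] at h1
    rw [Matrix.SpecialLinearGroup.coe_mul, Matrix.SpecialLinearGroup.coe_mul,
      Matrix.SpecialLinearGroup.coe_mul, ← hrz] at h1
    have hsc : ((Matrix.scalar (Fin 2)) r : Matrix (Fin 2) (Fin 2) ℂ)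
        = r • (1 : Matrix (Fin 2) (Fin 2) ℂ) := by
      simp [Matrix.scalar_apply, Matrix.smul_one_eq_diagonal]
    rw [hsc, Matrix.mul_smul, mul_one, Matrix.trace_smul, smul_eq_mul] at h1
    rw [Matrix.trace_mul_cycle, ← Matrix.SpecialLinearGroup.coe_mul, inv_mul_cancel,
      Matrix.SpecialLinearGroup.coe_one, Matrix.one_mul, trace_dMat] at h1
    exact h1.symm
  have hr2 : r ^ 2 = 1 := hr
  have key : (b - r * a) * (a * b - r) = 0 := by
    have e1 : (b + b⁻¹) * (a * b) = a * b ^ 2 + a := by field_simp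
    have e2 : (r * (a + a⁻¹)) * (a * b) = r * a ^ 2 * b + r * b := by field_simp
    have h2 : a * b ^ 2 + a = r * a ^ 2 * b + r * b := by rw [← e1, ← e2, htr]
    linear_combination h2 + a * hr2
  have habsr : ‖r‖ = 1 := by
    have hcase : r = 1 ∨ r = -1 := by
      have h3 : (r - 1) * (r + 1) = 0 := by linear_combination hr2
      rcases mul_eq_zero.mp h3 with h4 | h4
      · left; linear_combination h4
      · right; linear_combination h4
    rcases hcase with rfl | rfl <;> simp
  rcases mul_eq_zero.mp key with h5 | h5
  · have hba : b = r * a := sub_eq_zero.mp h5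
    rw [hba, norm_mul, habsr, one_mul]
  · have hab : a * b = r := sub_eq_zero.mp h5
    have h6 : ‖a‖ * ‖b‖ = 1 := by
      rw [← norm_mul, hab, habsr]
    nlinarith

/-- Let `Γ` be a cocompact Kleinian group and `α ∈ comm(Γ) \ Γ`.
Then there is a constant `c₀ > 1` such that `N(T) > c₀` for every loxodromic element
`T` of the double coset `Γα⁻¹Γ`. -/
theorem stmt_13 (Γ : Subgroup PSL2C)
    (hdisc : DiscreteTopology Γ) (hcpt : CompactSpace (PSL2C ⧸ Γ))
    (α : PSL2C) (hα : InCommensurator Γ α) (hαΓ : α ∉ Γ) :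
    ∃ c₀ : ℝ, 1 < c₀ ∧ ∀ T ∈ doubleCoset Γ α⁻¹, ∀ a : ℂ,
      IsLoxodromicWith T a → c₀ < ‖a‖ ^ 2 := by
  classical
  by_contra hcon
  push_neg at hcon
  have hpos : ∀ n : ℕ, (1 : ℝ) < 1 + 1 / (n + 1) := fun n => by
    have : (0:ℝ) < 1 / (n + 1) := by positivity
    linarith
  choose T hTD aseq hlox hbnd using fun n : ℕ => hcon (1 + 1 / (n + 1)) (hpos n)
  have hane : ∀ n, aseq n ≠ 0 := fun n => (hlox n).choose
  have habs : ∀ n, 1 < ‖aseq n‖ := fun n => (hlox n).choose_spec.1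
  have hconj : ∀ n, IsConj (projMk (dMat (aseq n) (hane n))) (T n) :=
    fun n => (hlox n).choose_spec.2
  -- Γ is closed
  have hΓcl : IsClosed ((Γ : Set PSL2C)) := Subgroup.isClosed_of_discrete
  have hGamfin : ∀ C : Set PSL2C, IsCompact C → ((Γ : Set PSL2C) ∩ C).Finite := by
    intro C hC
    have h1 : IsCompact ((Γ : Set PSL2C) ∩ C) := hC.inter_left hΓcl
    haveI hd2 : DiscreteTopology ((Γ : Set PSL2C) ∩ C : Set PSL2C) :=
      DiscreteTopology.of_subset hdisc Set.inter_subset_left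
    exact h1.finite (isDiscrete_iff_discreteTopology.mpr hd2)
  -- compact set of coset representatives
  obtain ⟨K, hKc, hK⟩ := exists_compact_cover Γ
  -- the compact annulus and the compact set M
  set Ann : Set ℂ := (fun a : ℂ => ‖a‖) ⁻¹' (Set.Icc 1 2) with hAnndef
  have hAnnc : IsCompact Ann := by
    apply IsCompact.of_isClosed_subset (isCompact_closedBall (0:ℂ) 2)
    · exact isClosed_Icc.preimage continuous_norm
    · intro a ha
      simp only [Metric.mem_closedBall, Complex.dist_eq, sub_zero]
      exact ha.2
  set K' : Set PSL2C := Inv.inv '' K with hK'def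
  have hK'c : IsCompact K' := hKc.image continuous_inv
  set gfun : ℂ → SL2C := (fun a => if h : a ≠ 0 then dMat a h else 1) with hgfundef
  set f : PSL2C × ℂ → PSL2C := (fun p => p.1 * projMk (gfun p.2) * p.1⁻¹) with hfdef
  have hproj : Continuous (fun A : SL2C => projMk A) := QuotientGroup.continuous_mk
  have hAnnne : ∀ a ∈ Ann, a ≠ 0 := by
    intro a ha h0
    have h1 := ha.1
    rw [h0] at h1
    norm_num at h1
  have hgcoe : ContinuousOn (fun a : ℂ => ((gfun a : SL2C) : Matrix (Fin 2) (Fin 2) ℂ)) Ann := by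
    have hbase : ContinuousOn (fun a : ℂ => a • (!![1,0;0,0] : Matrix (Fin 2) (Fin 2) ℂ)
        + a⁻¹ • (!![0,0;0,1] : Matrix (Fin 2) (Fin 2) ℂ)) Ann := by
      apply ContinuousOn.add
      · exact continuousOn_id.smul continuousOn_const
      · exact (ContinuousOn.inv₀ continuousOn_id hAnnne).smul continuousOn_const
    apply hbase.congr
    intro a ha
    have hne : a ≠ 0 := hAnnne a ha
    rw [hgfundef]
    simp only [dif_pos hne]
    show (dMat a hne : Matrix (Fin 2) (Fin 2) ℂ) = _
    rw [dMat]
    ext i j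
    fin_cases i <;> fin_cases j <;> simp
  have hg : ContinuousOn gfun Ann := by
    rw [continuousOn_iff_continuous_restrict] at hgcoe ⊢
    exact continuous_induced_rng.2 hgcoe
  have hfc : ContinuousOn f (K' ×ˢ Ann) := by
    apply ContinuousOn.mul
    · apply ContinuousOn.mul
      · exact continuous_fst.continuousOn
      · exact hproj.comp_continuousOn
          (hg.comp continuous_snd.continuousOn (fun p hp => hp.2))
    · exact continuous_fst.continuousOn.inv
  set M : Set PSL2C := f '' (K' ×ˢ Ann) with hMdef
  have hMc : IsCompact M := (hK'c.prod hAnnc).image_of_continuousOn hfc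
  -- the double coset intersected with any compact set is finite
  set D := doubleCoset Γ α⁻¹ with hDdef
  haveI hfinq : Finite (↥Γ ⧸ (conjSG Γ α).subgroupOf Γ) := Nat.finite_of_card_ne_zero hα.1
  have hcosetfin : ∀ g : PSL2C, ((fun y => g * y) '' (Γ : Set PSL2C) ∩ M).Finite := by
    intro g
    have h1 : (fun y => g * y) '' (Γ : Set PSL2C) ∩ M
        ⊆ (fun y => g * y) '' ((Γ : Set PSL2C) ∩ (fun y => g⁻¹ * y) '' M) := by
      rintro x ⟨⟨y, hy, rfl⟩, hxM⟩
      exact ⟨y, ⟨hy, ⟨g * y, hxM, by group⟩⟩, rfl⟩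
    exact Set.Finite.subset (Set.Finite.image _
      (hGamfin _ (hMc.image (continuous_const.mul continuous_id)))) h1
  have hDsub : D ⊆ ⋃ q : ↥Γ ⧸ (conjSG Γ α).subgroupOf Γ,
      (fun y => ((Quotient.out q : ↥Γ) : PSL2C) * α⁻¹ * y) '' (Γ : Set PSL2C) := by
    rintro x ⟨γ₁, h₁, γ₂, h₂, rfl⟩
    set g₁ : ↥Γ := ⟨γ₁, h₁⟩ with hg₁def
    set q : ↥Γ ⧸ (conjSG Γ α).subgroupOf Γ := QuotientGroup.mk g₁ with hqdef
    have hmem : (Quotient.out q)⁻¹ * g₁ ∈ (conjSG Γ α).subgroupOf Γ := by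
      rw [← QuotientGroup.eq]
      exact QuotientGroup.out_eq' q
    have hmem2 : (((Quotient.out q)⁻¹ * g₁ : ↥Γ) : PSL2C) ∈ conjSG Γ α :=
      Subgroup.mem_subgroupOf.mp hmem
    obtain ⟨g, hgΓ, hgeq⟩ := Subgroup.mem_map.mp hmem2
    -- hgeq : (MulAut.conj α⁻¹) g = ↑((Quotient.out q)⁻¹ * g₁)
    have hgeq' : α⁻¹ * g * α = ((Quotient.out q : ↥Γ) : PSL2C)⁻¹ * γ₁ := by
      have := hgeq
      simp only [MulEquiv.coe_toMonoidHom, MulAut.conj_apply, inv_inv] at this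
      rw [this]
      push_cast
      rfl
    refine Set.mem_iUnion.2 ⟨q, ⟨g * γ₂, Γ.mul_mem hgΓ h₂, ?_⟩⟩
    have hγ₁ : (γ₁ : PSL2C) = ((Quotient.out q : ↥Γ) : PSL2C) * (α⁻¹ * g * α) := by
      rw [hgeq']
      group
    rw [hγ₁]
    group
  have hDfin : (D ∩ M).Finite := by
    have h2 : D ∩ M ⊆ ⋃ q : ↥Γ ⧸ (conjSG Γ α).subgroupOf Γ,
        ((fun y => ((Quotient.out q : ↥Γ) : PSL2C) * α⁻¹ * y) '' (Γ : Set PSL2C) ∩ M) := by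
      rintro x ⟨hxD, hxM⟩
      obtain ⟨q, hq⟩ := Set.mem_iUnion.mp (hDsub hxD)
      exact Set.mem_iUnion.2 ⟨q, hq, hxM⟩
    exact Set.Finite.subset (Set.finite_iUnion fun q => hcosetfin _) h2
  -- construct the conjugated elements inside D ∩ M
  have key : ∀ n : ℕ, ∃ U, U ∈ D ∩ M ∧ IsConj (projMk (dMat (aseq n) (hane n))) U := by
    intro n
    obtain ⟨c, hc⟩ := isConj_iff.mp (hconj n)
    obtain ⟨k, hkK, hkq⟩ := hK c⁻¹
    have hγΓ : k⁻¹ * c⁻¹ ∈ Γ := QuotientGroup.eq.mp hkq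
    refine ⟨(k⁻¹ * c⁻¹) * T n * (k⁻¹ * c⁻¹)⁻¹, ⟨?_, ?_⟩, ?_⟩
    · obtain ⟨γ₁, h₁, γ₂, h₂, hTn⟩ := hTD n
      exact ⟨(k⁻¹ * c⁻¹) * γ₁, Γ.mul_mem hγΓ h₁, γ₂ * (k⁻¹ * c⁻¹)⁻¹,
        Γ.mul_mem h₂ (Γ.inv_mem hγΓ), by rw [hTn]; group⟩
    · refine ⟨(k⁻¹, aseq n), ⟨⟨k, hkK, rfl⟩, ?_⟩, ?_⟩
      · simp only [hAnndef, Set.mem_preimage, Set.mem_Icc]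
        refine ⟨le_of_lt (habs n), ?_⟩
        have hb := hbnd n
        have h1n : (1:ℝ) / (n + 1) ≤ 1 := by
          rw [div_le_one (by positivity)]
          have : (0:ℝ) ≤ n := Nat.cast_nonneg n
          linarith
        have habs0 : 0 ≤ ‖aseq n‖ := norm_nonneg _
        nlinarith
      · show k⁻¹ * projMk (gfun (aseq n)) * (k⁻¹)⁻¹ = _
        have hgv : gfun (aseq n) = dMat (aseq n) (hane n) := by
          rw [hgfundef]; exact dif_pos (hane n)
        rw [hgv, ← hc]
        group
    · refine isConj_iff.mpr ⟨(k⁻¹ * c⁻¹) * c, ?_⟩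
      rw [← hc]
      group
  choose Useq hUmem hUconj using key
  haveI hfinDM : Finite ↥(D ∩ M) := hDfin.to_subtype
  obtain ⟨y, hy⟩ := Finite.exists_infinite_fiber (fun n : ℕ => (⟨Useq n, hUmem n⟩ : ↥(D ∩ M)))
  have hyinf : {n : ℕ | (⟨Useq n, hUmem n⟩ : ↥(D ∩ M)) = y}.Infinite := by
    rw [← Set.infinite_coe_iff]
    exact hy
  obtain ⟨n₁, hn₁⟩ := hyinf.nonempty
  have hδ : (0:ℝ) < ‖aseq n₁‖ ^ 2 - 1 := by nlinarith [habs n₁]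
  obtain ⟨N, hN⟩ := exists_nat_one_div_lt hδ
  obtain ⟨n₂, hn₂, hNn₂⟩ := hyinf.exists_gt N
  have hUeq : Useq n₁ = Useq n₂ := by
    have h0 : (⟨Useq n₁, hUmem n₁⟩ : ↥(D ∩ M)) = ⟨Useq n₂, hUmem n₂⟩ := hn₁.trans hn₂.symm
    exact congrArg Subtype.val h0
  have hcc : IsConj (projMk (dMat (aseq n₁) (hane n₁))) (projMk (dMat (aseq n₂) (hane n₂))) := by
    have h1 := hUconj n₁
    have h2 := (hUconj n₂).symm
    rw [← hUeq] at h2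
    exact h1.trans h2
  have habseq := abs_eq_of_isConj (hane n₁) (hane n₂) (habs n₁) (habs n₂) hcc
  have h1 : ‖aseq n₂‖ ^ 2 ≤ 1 + 1 / (n₂ + 1) := hbnd n₂
  have h2 : (1:ℝ) / (n₂ + 1) ≤ 1 / (N + 1) := by
    apply one_div_le_one_div_of_le
    · positivity
    · push_cast
      have : (N:ℝ) ≤ n₂ := by exact_mod_cast le_of_lt hNn₂
      linarith
  have h3 : ‖aseq n₁‖ ^ 2 = ‖aseq n₂‖ ^ 2 := by rw [habseq]
  linarith
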